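/- The composition map φ(G, Q) = G ∘ Q, defined on pairs where G ∈ ℓ^∞[0,1] and Q : (0,1) → [0,1] is Borel measurable, is Hadamard differentiable tangentially to C[0,1] × L¹(0,1) at any (F, Q) such that F is the identity, with derivative φ'_{F,Q}(g, h) = g ∘ Q + h. -/

import Mathlib

open Set Filter MeasureTheory

/-- Hadamard differentiability (tangentially to `C[0,1] × L¹(0,1)`)
of the composition map `φ(G, Q) = G ∘ Q` at `(F, Q)` with `F = id`:
for all `tₙ ↓ 0`, `gₙ → g` uniformly on `[0,1]` with `g` continuous, and
`hₙ → h` in `L¹(0,1)` with `Q + tₙ hₙ` mapping into `[0,1]`, one has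
`‖((F + tₙ gₙ) ∘ (Q + tₙ hₙ) − F ∘ Q)/tₙ − (g ∘ Q + h)‖₁ → 0`. -/
theorem stmt9 (Q g : ℝ → ℝ) (hQm : Measurable Q) (hgm : Measurable g)
    (hQmap : ∀ u ∈ Ioo (0:ℝ) 1, Q u ∈ Icc (0:ℝ) 1)
    (hgc : ContinuousOn g (Icc (0:ℝ) 1))
    (t : ℕ → ℝ) (ht_pos : ∀ n, 0 < t n) (ht_anti : Antitone t)
    (ht : Tendsto t atTop (nhds 0))
    (gseq : ℕ → ℝ → ℝ) (hgseqm : ∀ n, Measurable (gseq n))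
    (hgseq : TendstoUniformlyOn gseq g atTop (Icc (0:ℝ) 1))
    (h : ℝ → ℝ) (hh : IntegrableOn h (Ioo (0:ℝ) 1))
    (hseq : ℕ → ℝ → ℝ) (hhseq : ∀ n, IntegrableOn (hseq n) (Ioo (0:ℝ) 1))
    (hhconv : Tendsto (fun n => ∫ u in Ioo (0:ℝ) 1, |hseq n u - h u|) atTop (nhds 0))
    (hmap : ∀ n, ∀ u ∈ Ioo (0:ℝ) 1, Q u + t n * hseq n u ∈ Icc (0:ℝ) 1) :
    Tendsto (fun n => ∫ u in Ioo (0:ℝ) 1,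
        |((Q u + t n * hseq n u + t n * gseq n (Q u + t n * hseq n u)) - Q u) / t n
          - (g (Q u) + h u)|) atTop (nhds 0) := by
  have hμfin : volume (Ioo (0:ℝ) 1) < ⊤ := by simp [Real.volume_Ioo]
  -- uniform continuity and boundedness of g on [0,1]
  have hucg : UniformContinuousOn g (Icc (0:ℝ) 1) :=
    isCompact_Icc.uniformContinuousOn_of_continuous hgc
  obtain ⟨M, hM0, hMb⟩ : ∃ M : ℝ, 0 < M ∧ ∀ x ∈ Icc (0:ℝ) 1, |g x| ≤ M := by
    obtain ⟨M, hM⟩ := isCompact_Icc.exists_bound_of_continuousOn hgc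
    refine ⟨max M 1, lt_of_lt_of_le one_pos (le_max_right _ _), fun x hx => ?_⟩
    have h1 : |g x| ≤ M := by simpa [Real.norm_eq_abs] using hM x hx
    exact h1.trans (le_max_left _ _)
  set K : ℝ := ∫ u in Ioo (0:ℝ) 1, |h u| with hK
  have hK0 : 0 ≤ K := integral_nonneg fun u => abs_nonneg _
  rw [Metric.tendsto_atTop]
  intro ε hε
  set ε' : ℝ := ε / 5 with hε'def
  have hε'0 : 0 < ε' := by positivity
  obtain ⟨δ, hδ0, hδ⟩ := Metric.uniformContinuousOn_iff.mp hucg ε' hε'0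
  -- events
  have ev1 : ∀ᶠ n in atTop, ∀ x ∈ Icc (0:ℝ) 1, dist (g x) (gseq n x) < ε' :=
    Metric.tendstoUniformlyOn_iff.mp hgseq ε' hε'0
  have ev2 : ∀ᶠ n in atTop, (∫ u in Ioo (0:ℝ) 1, |hseq n u - h u|) < ε' := by
    have := (Metric.tendsto_atTop.mp hhconv) ε' hε'0
    obtain ⟨N, hN⟩ := this
    refine eventually_atTop.mpr ⟨N, fun n hn => ?_⟩
    have := hN n hn
    rw [Real.dist_eq, sub_zero] at this
    exact lt_of_le_of_lt (le_abs_self _) this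
  set c : ℝ := ε' * δ / (2 * M * (K + ε' + 1)) with hc
  have hc0 : 0 < c := by positivity
  have ev3 : ∀ᶠ n in atTop, t n < c := by
    have := (Metric.tendsto_atTop.mp ht) c hc0
    obtain ⟨N, hN⟩ := this
    refine eventually_atTop.mpr ⟨N, fun n hn => ?_⟩
    have := hN n hn
    rw [Real.dist_eq, sub_zero] at this
    exact lt_of_le_of_lt (le_abs_self _) this
  obtain ⟨N, hN⟩ := eventually_atTop.mp (ev1.and (ev2.and ev3))
  refine ⟨N, fun n hn => ?_⟩
  obtain ⟨hn1, hn2, hn3⟩ := hN n hn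
  set A : ℝ := ∫ u in Ioo (0:ℝ) 1, |hseq n u - h u| with hA
  have hA0 : 0 ≤ A := integral_nonneg fun u => abs_nonneg _
  set S : ℝ := ∫ u in Ioo (0:ℝ) 1, |hseq n u| with hS
  have hS0 : 0 ≤ S := integral_nonneg fun u => abs_nonneg _
  have htn : 0 < t n := ht_pos n
  -- bound S ≤ K + A
  have hSle : S ≤ K + A := by
    have hle : ∀ u, |hseq n u| ≤ |h u| + |hseq n u - h u| := by
      intro u
      have := abs_add_le (h u) (hseq n u - h u)
      simpa using this
    calc S ≤ ∫ u in Ioo (0:ℝ) 1, (|h u| + |hseq n u - h u|) :=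
          integral_mono (hhseq n).abs (hh.abs.add ((hhseq n).sub hh).abs) hle
      _ = K + A := integral_add hh.abs ((hhseq n).sub hh).abs
  -- the upper bound function
  set C : ℝ := 2 * M / δ * t n with hC
  have hC0 : 0 ≤ C := by positivity
  set b : ℝ → ℝ := fun u => |hseq n u - h u| + 2 * ε' + C * |hseq n u| with hb
  have i1 : IntegrableOn (fun u => |hseq n u - h u|) (Ioo (0:ℝ) 1) := ((hhseq n).sub hh).abs
  have i2 : IntegrableOn (fun _ : ℝ => 2 * ε') (Ioo (0:ℝ) 1) :=
    integrableOn_const hμfin.ne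
  have i3 : IntegrableOn (fun u => C * |hseq n u|) (Ioo (0:ℝ) 1) := (hhseq n).abs.const_mul C
  have i12 : IntegrableOn (fun u => |hseq n u - h u| + 2 * ε') (Ioo (0:ℝ) 1) := i1.add i2
  have hbint : IntegrableOn b (Ioo (0:ℝ) 1) := i12.add i3
  -- pointwise bound
  have hpt : ∀ u ∈ Ioo (0:ℝ) 1,
      |((Q u + t n * hseq n u + t n * gseq n (Q u + t n * hseq n u)) - Q u) / t n
          - (g (Q u) + h u)| ≤ b u := by
    intro u hu
    have hy : Q u + t n * hseq n u ∈ Icc (0:ℝ) 1 := hmap n u hu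
    have hQu : Q u ∈ Icc (0:ℝ) 1 := hQmap u hu
    set y : ℝ := Q u + t n * hseq n u with hyd
    have heq : ((Q u + t n * hseq n u + t n * gseq n y) - Q u) / t n - (g (Q u) + h u)
        = (hseq n u - h u) + ((gseq n y - g y) + (g y - g (Q u))) := by
      field_simp
      ring
    rw [heq]
    have h1 : |gseq n y - g y| < ε' := by
      have := hn1 y hy
      rwa [dist_comm, Real.dist_eq] at this
    have h2 : |g y - g (Q u)| ≤ ε' + C * |hseq n u| := by
      by_cases hcase : |t n * hseq n u| < δ
      · have hd : dist y (Q u) < δ := by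
          rw [Real.dist_eq]
          simpa [hyd] using hcase
        have := hδ y hy (Q u) hQu hd
        rw [Real.dist_eq] at this
        exact (le_of_lt this).trans
          (le_add_of_nonneg_right (mul_nonneg hC0 (abs_nonneg _)))
      · push_neg at hcase
        have habs : |t n * hseq n u| = t n * |hseq n u| := by
          rw [abs_mul, abs_of_pos htn]
        have hge : δ ≤ t n * |hseq n u| := by rw [← habs]; exact hcase
        have hbd : |g y - g (Q u)| ≤ 2 * M := by
          calc |g y - g (Q u)| ≤ |g y| + |g (Q u)| := abs_sub _ _
            _ ≤ M + M := add_le_add (hMb y hy) (hMb (Q u) hQu)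
            _ = 2 * M := by ring
        have : 2 * M ≤ C * |hseq n u| := by
          rw [hC]
          rw [div_mul_eq_mul_div, div_mul_eq_mul_div, le_div_iff₀ hδ0]
          nlinarith
        linarith
    calc |(hseq n u - h u) + ((gseq n y - g y) + (g y - g (Q u)))|
        ≤ |hseq n u - h u| + (|gseq n y - g y| + |g y - g (Q u)|) :=
          (abs_add_le _ _).trans (by gcongr; exact abs_add_le _ _)
      _ ≤ |hseq n u - h u| + (ε' + (ε' + C * |hseq n u|)) := by
          gcongr <;> exact le_of_lt h1
      _ = b u := by rw [hb]; ring
  -- integral bound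
  have hIle : (∫ u in Ioo (0:ℝ) 1,
      |((Q u + t n * hseq n u + t n * gseq n (Q u + t n * hseq n u)) - Q u) / t n
          - (g (Q u) + h u)|) ≤ ∫ u in Ioo (0:ℝ) 1, b u := by
    refine integral_mono_of_nonneg (ae_of_all _ fun u => abs_nonneg _) hbint ?_
    exact (ae_restrict_iff' measurableSet_Ioo).mpr (ae_of_all _ hpt)
  have hbval : (∫ u in Ioo (0:ℝ) 1, b u) = A + 2 * ε' + C * S := by
    simp only [hb]
    rw [integral_add i12 i3, integral_add i1 i2, setIntegral_const, MeasureTheory.integral_const_mul]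
    simp [Real.volume_Ioo, hA, hS]
  have hI0 : 0 ≤ ∫ u in Ioo (0:ℝ) 1,
      |((Q u + t n * hseq n u + t n * gseq n (Q u + t n * hseq n u)) - Q u) / t n
          - (g (Q u) + h u)| := integral_nonneg fun u => abs_nonneg _
  rw [Real.dist_eq, sub_zero, abs_of_nonneg hI0]
  -- final estimate
  have hCS : C * S < ε' := by
    have h1 : C * S ≤ C * (K + ε' + 1) := by
      apply mul_le_mul_of_nonneg_left _ hC0
      linarith
    have hpos : 0 < 2 * M / δ := by positivity
    have hpos2 : 0 < K + ε' + 1 := by linarith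
    have hlt : 2 * M / δ * t n * (K + ε' + 1) < 2 * M / δ * c * (K + ε' + 1) :=
      mul_lt_mul_of_pos_right (mul_lt_mul_of_pos_left hn3 hpos) hpos2
    have hceq : 2 * M / δ * c * (K + ε' + 1) = ε' := by
      rw [hc]
      field_simp
    have h2 : C * (K + ε' + 1) < ε' := by rw [hC]; linarith
    linarith
  calc (∫ u in Ioo (0:ℝ) 1,
      |((Q u + t n * hseq n u + t n * gseq n (Q u + t n * hseq n u)) - Q u) / t n
          - (g (Q u) + h u)|) ≤ A + 2 * ε' + C * S := hbval ▸ hIle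
    _ < ε' + 2 * ε' + ε' := by
        apply add_lt_add (add_lt_add_left hn2 _) hCS
    _ < ε := by rw [hε'def]; linarith
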